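/- arXiv:2509.06226 — 2 statements merged into one kernel-verified Lean document; each statement's English description precedes it below -/
import Mathlib

section
/- Let $R$ be a commutative local ring and let $f = \sum_{i \leq k} a_i z^i$ be a nonzero element of the ring $R((z^{-1}))$ of formal Laurent series in $z^{-1}$ (finitely many positive powers of $z$, arbitrary negative powers). Then $f$ is invertible in $R((z^{-1}))$ if and only if there exists $l \leq k$ such that $a_l$ is a unit of $R$ and $a_i$ is nilpotent for all $i > l$. -/
open HahnSeries

/-- A Laurent series whose coefficient at its order is a unit is a unit. -/
lemma aux_isUnit_of_order_coeff {R : Type*} [CommRing R] (u : LaurentSeries R)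
    (hu : IsUnit (u.coeff u.order)) : IsUnit u := by
  by_cases h0 : u = 0
  · subst h0
    simp only [HahnSeries.coeff_zero] at hu
    rw [isUnit_zero_iff] at hu
    haveI : Subsingleton R := subsingleton_of_zero_eq_one hu
    have : (0 : LaurentSeries R) = 1 := Subsingleton.elim _ _
    exact this ▸ isUnit_one
  · have hdec := u.single_order_mul_powerSeriesPart
    have h1 : IsUnit (single u.order (1 : R) : LaurentSeries R) := by
      refine IsUnit.of_mul_eq_one (single (-u.order) 1) ?_
      rw [single_mul_single, add_neg_cancel, mul_one, single_zero_one]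
    have h2 : IsUnit (u.powerSeriesPart) := by
      rw [PowerSeries.isUnit_iff_constantCoeff]
      have : PowerSeries.constantCoeff u.powerSeriesPart = u.coeff u.order := by
        rw [← PowerSeries.coeff_zero_eq_constantCoeff_apply,
          LaurentSeries.powerSeriesPart_coeff]
        simp
      rwa [this]
    have h2' : IsUnit (HahnSeries.ofPowerSeries ℤ R u.powerSeriesPart) :=
      h2.map (HahnSeries.ofPowerSeries ℤ R)
    rw [← hdec]
    exact h1.mul h2'

lemma aux_map_isUnit {R S : Type*} [CommRing R] [CommRing S] {f : LaurentSeries R}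
    (h : IsUnit f) (φ : R →+* S) : IsUnit (f.map φ : LaurentSeries S) := by
  obtain ⟨g, hg⟩ := h.exists_right_inv
  refine IsUnit.of_mul_eq_one (g.map φ) ?_
  have h1 : ((f * g).map φ : LaurentSeries S) = (f.map φ) * (g.map φ) := by
    have := HahnSeries.map_mul (R := R) (S := S) (Γ := ℤ) (φ : R →ₙ+* S) (x := f) (y := g)
    convert this using 2 <;> rfl
  rw [← h1, hg]
  ext i
  simp only [HahnSeries.map_coeff, HahnSeries.coeff_one, ZeroHom.coe_coe]
  split <;> simp

/-- Let `R` be a commutative local ring and `f` a nonzero element of the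
ring `R((z⁻¹))` of formal Laurent series in `z⁻¹` (finitely many positive powers of `z`).
Writing `t = z⁻¹`, this ring is the Laurent series ring `R((t))`, with the coefficient of
`z^i` being the coefficient of `t^{-i}`.  Then `f` is invertible iff there exists an index
`l` (in `t`-exponents) such that the coefficient of `t^l` is a unit of `R` and all
coefficients of `t^j` for `j < l` (i.e. all `z`-coefficients above the unit one) are
nilpotent. -/
theorem statement7 {R : Type*} [CommRing R] [IsLocalRing R]
    (f : LaurentSeries R) (hf : f ≠ 0) :
    IsUnit f ↔ ∃ l : ℤ, IsUnit (f.coeff l) ∧ ∀ j < l, IsNilpotent (f.coeff j) := by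
  constructor
  · intro hU
    set φ := IsLocalRing.residue R
    set fb : LaurentSeries (IsLocalRing.ResidueField R) := f.map φ with hfb
    have hfbU : IsUnit fb := aux_map_isUnit hU φ
    have hfb0 : fb ≠ 0 := hfbU.ne_zero
    set l := fb.order with hl
    have hcoeffl : IsUnit (f.coeff l) := by
      rw [← IsLocalRing.notMem_maximalIdeal, ← IsLocalRing.residue_eq_zero_iff]
      have : φ (f.coeff l) = fb.coeff l := rfl
      rw [this]
      exact HahnSeries.coeff_order_eq_zero.not.mpr hfb0
    refine ⟨l, hcoeffl, fun j hj => ?_⟩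
    have hmem : ∀ i < l, f.coeff i ∈ IsLocalRing.maximalIdeal R := by
      intro i hi
      rw [← IsLocalRing.residue_eq_zero_iff]
      have : φ (f.coeff i) = fb.coeff i := rfl
      rw [this]
      exact HahnSeries.coeff_eq_zero_of_lt_order hi
    rw [nilpotent_iff_mem_prime]
    intro P hP
    haveI := hP
    set ψ := Ideal.Quotient.mk P
    set fP : LaurentSeries (R ⧸ P) := f.map ψ with hfP
    have hfPU : IsUnit fP := aux_map_isUnit hU ψ
    have hcl : fP.coeff l ≠ 0 := by
      have : fP.coeff l = ψ (f.coeff l) := rfl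
      rw [this]
      exact (hcoeffl.map ψ).ne_zero
    have hfP0 : fP ≠ 0 := fun h => hcl (by rw [h]; rfl)
    have hle : fP.order ≤ l := HahnSeries.order_le_of_coeff_ne_zero hcl
    have hord : fP.order = l := by
      rcases lt_or_eq_of_le hle with hlt | he
      · exfalso
        have hlead : IsUnit (fP.leadingCoeff) := HahnSeries.isUnit_iff.mp hfPU
        rw [HahnSeries.leadingCoeff_eq] at hlead
        have hco : fP.coeff fP.order = ψ (f.coeff fP.order) := rfl
        rw [hco] at hlead
        obtain ⟨v, hv⟩ := hlead
        obtain ⟨b, hb⟩ := Ideal.Quotient.mk_surjective (↑v⁻¹ : R ⧸ P)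
        have h1 : ψ (f.coeff fP.order * b) = 1 := by
          rw [map_mul, hb, ← hv, Units.mul_inv]
        have hmP : f.coeff fP.order * b - 1 ∈ P := by
          rw [← Ideal.Quotient.eq_zero_iff_mem]
          rw [map_sub, h1, map_one, sub_self]
        have hPm : P ≤ IsLocalRing.maximalIdeal R :=
          IsLocalRing.le_maximalIdeal hP.ne_top
        have h2 : f.coeff fP.order * b ∈ IsLocalRing.maximalIdeal R :=
          Ideal.mul_mem_right _ _ (hmem _ hlt)
        have h3 : (1 : R) ∈ IsLocalRing.maximalIdeal R := by
          have := Ideal.sub_mem _ h2 (hPm hmP)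
          simpa using this
        exact IsLocalRing.maximalIdeal.isMaximal R |>.ne_top (Ideal.eq_top_of_isUnit_mem _ h3 isUnit_one)
      · exact he
    have : fP.coeff j = 0 := HahnSeries.coeff_eq_zero_of_lt_order (by rw [hord]; exact hj)
    have : ψ (f.coeff j) = 0 := this
    exact Ideal.Quotient.eq_zero_iff_mem.mp this
  · rintro ⟨l, hl, hnil⟩
    classical
    haveI : Nontrivial R := inferInstance
    set t : Set ℤ := {j | f.coeff j ≠ 0 ∧ j < l} with ht
    have htfin : t.Finite := by
      apply (Set.finite_Icc f.order (l - 1)).subset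
      rintro j ⟨hj1, hj2⟩
      exact ⟨HahnSeries.order_le_of_coeff_ne_zero hj1, by omega⟩
    set h : LaurentSeries R := ∑ j ∈ htfin.toFinset, single j (f.coeff j) with hh
    have hcoeff : ∀ i, h.coeff i = if i ∈ t then f.coeff i else 0 := by
      intro i
      rw [hh]
      rw [show (∑ j ∈ htfin.toFinset, (single j (f.coeff j)) : LaurentSeries R).coeff i
          = ∑ j ∈ htfin.toFinset, (single j (f.coeff j) : LaurentSeries R).coeff i from
          map_sum (HahnSeries.coeff.addMonoidHom i) _ _]
      by_cases hi : i ∈ t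
      · rw [if_pos hi, Finset.sum_eq_single i]
        · rw [HahnSeries.coeff_single_same]
        · intro b _ hb
          exact HahnSeries.coeff_single_of_ne (Ne.symm hb)
        · intro habs
          exact absurd (htfin.mem_toFinset.mpr hi) habs
      · rw [if_neg hi]
        apply Finset.sum_eq_zero
        intro b hb
        have : i ≠ b := fun hc => hi (hc ▸ htfin.mem_toFinset.mp hb)
        exact HahnSeries.coeff_single_of_ne this
    set u : LaurentSeries R := f - h with hu
    have hucoeff : ∀ i, u.coeff i = if i < l then 0 else f.coeff i := by
      intro i
      rw [hu, HahnSeries.coeff_sub, hcoeff]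
      by_cases hi : i < l
      · rw [if_pos hi]
        by_cases hz : f.coeff i = 0
        · simp [hz, ht, hi]
        · rw [if_pos ⟨hz, hi⟩]; ring
      · rw [if_neg hi, if_neg (fun hc => hi hc.2), sub_zero]
    have hul : u.coeff l = f.coeff l := by rw [hucoeff]; simp
    have hu0 : u ≠ 0 := by
      intro hc
      have := hul
      rw [hc, HahnSeries.coeff_zero] at this
      exact hl.ne_zero this.symm
    have huord : u.order = l := by
      refine le_antisymm (HahnSeries.order_le_of_coeff_ne_zero (hul ▸ hl.ne_zero)) ?_
      by_contra hc
      push_neg at hc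
      have h1 := HahnSeries.coeff_order_eq_zero.not.mpr hu0
      rw [hucoeff] at h1
      rw [if_pos hc] at h1
      exact h1 rfl
    have huU : IsUnit u := by
      apply aux_isUnit_of_order_coeff
      rw [huord, hul]; exact hl
    have hhnil : IsNilpotent h := by
      rw [← mem_nilradical]
      apply Ideal.sum_mem
      intro j hj
      rw [mem_nilradical]
      obtain ⟨n, hn⟩ := hnil j (htfin.mem_toFinset.mp hj).2
      exact ⟨n, by rw [HahnSeries.single_pow, hn, HahnSeries.single_eq_zero]⟩
    have : f = u + h := by rw [hu]; ring
    rw [this]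
    exact hhnil.isUnit_add_left_of_commute huU (Commute.all _ _)
end

section
/- Let $\Lambda$ be an abelian group (written additively) and let $H$ be a commutative ring equipped with a group homomorphism $\lambda \mapsto s_\lambda$ from $\Lambda$ to the group of ring automorphisms of $H$. Suppose given elements $e(\lambda) \in H$ for $\lambda \in \Lambda$, nonzerodivisors, such that the free left $H$-module $\mathcal{A}$ with basis $\{r_\lambda\}_{\lambda \in \Lambda}$ carries an associative product determined by $r_\lambda \cdot x = s_\lambda(x) r_\lambda$ for $x \in H$ and $r_\lambda \cdot r_\mu = \frac{e(\lambda)\, s_\lambda(e(\mu))}{e(\lambda+\mu)} \, r_{\lambda+\mu}$ (assuming $e(\lambda+\mu)$ divides $e(\lambda)s_\lambda(e(\mu))$ in $H$). Let $(K, E(\lambda), S_\lambda)$ be analogous data defining an algebra $\mathcal{A}^\times$ over $K$ with basis $\{r_\lambda^\times\}$. Suppose $\mathrm{ch}\colon K \to H$ is a ring homomorphism satisfying $\mathrm{ch} \circ S_\lambda = s_\lambda \circ \mathrm{ch}$ for all $\lambda$, and there exist invertible elements $T(\lambda) \in H$ with $\mathrm{ch}(E(\lambda)) = T(\lambda)^{-1}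 e(\lambda)$ and $T(\lambda+\mu) = T(\lambda) \cdot s_\lambda(T(\mu))$ for all $\lambda, \mu$. Then the map $\Upsilon\colon \mathcal{A}^\times \to \mathcal{A}$ defined by $\Upsilon(x \cdot r_\lambda^\times) = \mathrm{ch}(x)\, T(\lambda)^{-1}\, r_\lambda$ for $x \in K$ is a ring homomorphism. -/
/-- The "Coulomb branch" type product on the free module `Λ →₀ H` with basis `{r_λ}`,
determined by `r_λ · x = s_λ(x) r_λ` and `r_λ · r_μ = c(λ,μ) r_{λ+μ}`, where
`c(λ,μ) = e(λ) s_λ(e(μ)) / e(λ+μ)` is the structure constant: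
`(x r_λ) · (y r_μ) = x · s_λ(y) · c(λ,μ) · r_{λ+μ}`. -/
noncomputable def coulombMul {Λ H : Type*} [AddCommGroup Λ] [CommRing H]
    (s : Λ → H ≃+* H) (c : Λ → Λ → H) (f g : Λ →₀ H) : Λ →₀ H :=
  f.sum fun l x => g.sum fun m y => Finsupp.single (l + m) (x * s l y * c l m)

/-- The comparison map `Υ : 𝒜^× → 𝒜`, `x · r_λ^× ↦ ch(x) · T(λ)⁻¹ · r_λ`. -/
noncomputable def upsilonMap {Λ H K : Type*} [AddCommGroup Λ] [CommRing H] [CommRing K]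
    (ch : K →+* H) (T : Λ → Hˣ) (f : Λ →₀ K) : Λ →₀ H :=
  f.sum fun l x => Finsupp.single l (ch x * ((T l)⁻¹ : Hˣ))


private lemma cm_single' {Λ R : Type*} [AddCommGroup Λ] [CommRing R]
    (σ : Λ → R ≃+* R) (γ : Λ → Λ → R) (l m : Λ) (x y : R) :
    coulombMul σ γ (Finsupp.single l x) (Finsupp.single m y)
      = Finsupp.single (l + m) (x * σ l y * γ l m) := by
  simp only [coulombMul]
  rw [Finsupp.sum_single_index (by simp)]
  exact Finsupp.sum_single_index (by simp)

private lemma cm_zero_left' {Λ R : Type*} [AddCommGroup Λ] [CommRing R]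
    (σ : Λ → R ≃+* R) (γ : Λ → Λ → R) (g : Λ →₀ R) : coulombMul σ γ 0 g = 0 := by
  simp only [coulombMul]; exact Finsupp.sum_zero_index

private lemma cm_zero_right' {Λ R : Type*} [AddCommGroup Λ] [CommRing R]
    (σ : Λ → R ≃+* R) (γ : Λ → Λ → R) (f : Λ →₀ R) : coulombMul σ γ f 0 = 0 := by
  simp only [coulombMul, Finsupp.sum_zero_index]
  exact Finsupp.sum_fun_zero (N := Λ →₀ R) f

private lemma cm_add_left' {Λ R : Type*} [AddCommGroup Λ] [CommRing R]
    (σ : Λ → R ≃+* R) (γ : Λ → Λ → R) (f f' g : Λ →₀ R) :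
    coulombMul σ γ (f + f') g = coulombMul σ γ f g + coulombMul σ γ f' g := by
  simp only [coulombMul]
  refine Finsupp.sum_add_index' (fun l => by simp) (fun l x x' => ?_)
  rw [← Finsupp.sum_add]
  congr 1; funext m y
  rw [add_mul, add_mul, Finsupp.single_add]

private lemma cm_add_right' {Λ R : Type*} [AddCommGroup Λ] [CommRing R]
    (σ : Λ → R ≃+* R) (γ : Λ → Λ → R) (f g g' : Λ →₀ R) :
    coulombMul σ γ f (g + g') = coulombMul σ γ f g + coulombMul σ γ f g' := by
  simp only [coulombMul]
  rw [← Finsupp.sum_add]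
  congr 1; funext l x
  refine Finsupp.sum_add_index' (fun m => by simp) (fun m y y' => ?_)
  rw [map_add, mul_add, add_mul, Finsupp.single_add]

/-- Let `Λ` be an abelian group, `H` a commutative ring with a
homomorphism `λ ↦ s_λ` from `Λ` to ring automorphisms of `H`, nonzerodivisors
`e(λ) ∈ H`, and structure constants `c(λ,μ)` with `c(λ,μ)·e(λ+μ) = e(λ)·s_λ(e(μ))`,
defining the product `coulombMul s c` on the free `H`-module `𝒜 = Λ →₀ H` with basis
`{r_λ}` (so `r_λ x = s_λ(x) r_λ` and `r_λ r_μ = (e(λ)s_λ(e(μ))/e(λ+μ)) r_{λ+μ}`).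
Let `(K, S, E, C)` be analogous data defining `𝒜^× = Λ →₀ K`.  Suppose `ch : K → H` is
a ring homomorphism with `ch ∘ S_λ = s_λ ∘ ch`, and `T(λ) ∈ H^×` are invertible elements
with `ch(E(λ)) = T(λ)⁻¹ e(λ)` and `T(λ+μ) = T(λ) · s_λ(T(μ))`.  Then the map
`Υ : 𝒜^× → 𝒜`, `x r_λ^× ↦ ch(x) T(λ)⁻¹ r_λ`, is a ring homomorphism: it is additive,
multiplicative, and sends `1·r_0^×` to `1·r_0`. -/
theorem statement14 {Λ H K : Type*} [AddCommGroup Λ] [CommRing H] [CommRing K]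
    (s : Λ → H ≃+* H) (hs0 : s 0 = RingEquiv.refl H)
    (hsadd : ∀ l m x, s (l + m) x = s l (s m x))
    (e : Λ → H) (he : ∀ l, e l ∈ nonZeroDivisors H)
    (c : Λ → Λ → H) (hc : ∀ l m, c l m * e (l + m) = e l * s l (e m))
    (S : Λ → K ≃+* K) (hS0 : S 0 = RingEquiv.refl K)
    (hSadd : ∀ l m x, S (l + m) x = S l (S m x))
    (E : Λ → K) (hE : ∀ l, E l ∈ nonZeroDivisors K)
    (C : Λ → Λ → K) (hC : ∀ l m, C l m * E (l + m) = E l * S l (E m))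
    (ch : K →+* H) (hch : ∀ l x, ch (S l x) = s l (ch x))
    (T : Λ → Hˣ) (hT : ∀ l, ch (E l) = ((T l)⁻¹ : Hˣ) * e l)
    (hTc : ∀ l m, (T (l + m) : H) = (T l : H) * s l (T m : H)) :
    (∀ f g : Λ →₀ K, upsilonMap ch T (f + g) = upsilonMap ch T f + upsilonMap ch T g) ∧
    (∀ f g : Λ →₀ K,
      upsilonMap ch T (coulombMul S C f g) =
        coulombMul s c (upsilonMap ch T f) (upsilonMap ch T g)) ∧
    upsilonMap ch T (Finsupp.single 0 1) = Finsupp.single 0 1 := by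
  set U : (Λ →₀ K) → (Λ →₀ H) := upsilonMap ch T with hU
  have U_single : ∀ (l : Λ) (x : K),
      U (Finsupp.single l x) = Finsupp.single l (ch x * ((T l)⁻¹ : Hˣ)) := by
    intro l x
    simp only [hU, upsilonMap]
    exact Finsupp.sum_single_index (by simp)
  have U_add : ∀ f g : Λ →₀ K, U (f + g) = U f + U g := by
    intro f g
    simp only [hU, upsilonMap]
    exact Finsupp.sum_add_index' (fun l => by simp)
      (fun l x y => by rw [map_add, add_mul, Finsupp.single_add])
  have U_zero : U 0 = 0 := by simp only [hU, upsilonMap]; exact Finsupp.sum_zero_index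
  have Tinv : ∀ l m : Λ, ((T l)⁻¹ : Hˣ) * s l ((T m)⁻¹ : Hˣ) = ((T (l + m))⁻¹ : Hˣ) := by
    intro l m
    have h1 : (s l ((T m)⁻¹ : Hˣ)) * (s l (T m : H)) = 1 := by
      rw [← map_mul, Units.inv_mul, map_one]
    have h2 : (((T l)⁻¹ : Hˣ) * s l ((T m)⁻¹ : Hˣ)) * (T (l + m) : H) = 1 := by
      rw [hTc l m]
      calc (((T l)⁻¹ : Hˣ) * s l ((T m)⁻¹ : Hˣ)) * ((T l : H) * s l (T m : H))
          = (((T l)⁻¹ : Hˣ) * (T l : H)) * ((s l ((T m)⁻¹ : Hˣ)) * s l (T m : H)) := by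
            ring
        _ = 1 := by rw [Units.inv_mul, h1, mul_one]
    calc ((T l)⁻¹ : Hˣ) * s l ((T m)⁻¹ : Hˣ)
        = (((T l)⁻¹ : Hˣ) * s l ((T m)⁻¹ : Hˣ)) * ((T (l + m) : H) * ((T (l + m))⁻¹ : Hˣ)) := by
          rw [Units.mul_inv, mul_one]
      _ = ((((T l)⁻¹ : Hˣ) * s l ((T m)⁻¹ : Hˣ)) * (T (l + m) : H)) * ((T (l + m))⁻¹ : Hˣ) := by
          ring
      _ = ((T (l + m))⁻¹ : Hˣ) := by rw [h2, one_mul]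
  have chC : ∀ l m : Λ, ch (C l m) = c l m := by
    intro l m
    have key : ch (C l m) * (((T (l + m))⁻¹ : Hˣ) * e (l + m))
        = (((T l)⁻¹ : Hˣ) * e l) * s l (((T m)⁻¹ : Hˣ) * e m) := by
      rw [← hT, ← hT, ← hT, ← hch, ← map_mul, hC l m, map_mul]
    have key2 : (ch (C l m) * ((T (l + m))⁻¹ : Hˣ)) * e (l + m)
        = (c l m * ((T (l + m))⁻¹ : Hˣ)) * e (l + m) := by
      calc (ch (C l m) * ((T (l + m))⁻¹ : Hˣ)) * e (l + m)
          = ch (C l m) * (((T (l + m))⁻¹ : Hˣ) * e (l + m)) := by ring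
        _ = (((T l)⁻¹ : Hˣ) * e l) * s l (((T m)⁻¹ : Hˣ) * e m) := key
        _ = (((T l)⁻¹ : Hˣ) * s l ((T m)⁻¹ : Hˣ)) * (e l * s l (e m)) := by
            rw [map_mul]; ring
        _ = ((T (l + m))⁻¹ : Hˣ) * (c l m * e (l + m)) := by rw [Tinv, hc]
        _ = (c l m * ((T (l + m))⁻¹ : Hˣ)) * e (l + m) := by ring
    have key3 : ch (C l m) * ((T (l + m))⁻¹ : Hˣ) = c l m * ((T (l + m))⁻¹ : Hˣ) :=
      (mul_cancel_right_mem_nonZeroDivisors (he (l + m))).mp key2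
    calc ch (C l m)
        = (ch (C l m) * ((T (l + m))⁻¹ : Hˣ)) * (T (l + m) : H) := by
          rw [mul_assoc, Units.inv_mul, mul_one]
      _ = (c l m * ((T (l + m))⁻¹ : Hˣ)) * (T (l + m) : H) := by rw [key3]
      _ = c l m := by rw [mul_assoc, Units.inv_mul, mul_one]
  have mul_single : ∀ (l m : Λ) (x y : K),
      U (coulombMul S C (Finsupp.single l x) (Finsupp.single m y))
        = coulombMul s c (U (Finsupp.single l x)) (U (Finsupp.single m y)) := by
    intro l m x y
    rw [cm_single', U_single, U_single, U_single, cm_single']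
    congr 1
    rw [map_mul, map_mul, hch, chC, ← Tinv l m, map_mul]
    ring
  have hT0 : T 0 = 1 := by
    have hu : T (0 + 0) = T 0 * T 0 := Units.ext (by simpa [hs0] using hTc 0 0)
    have hu' : T 0 * 1 = T 0 * T 0 := by
      rw [mul_one, ← hu]; norm_num
    exact (mul_left_cancel hu').symm
  refine ⟨U_add, ?_, ?_⟩
  · intro f g
    induction f using Finsupp.induction with
    | zero => rw [cm_zero_left', U_zero, cm_zero_left']
    | single_add l x f _ _ ih =>
      rw [cm_add_left', U_add, U_add, ih, cm_add_left']
      congr 1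
      clear ih
      induction g using Finsupp.induction with
      | zero => rw [cm_zero_right', U_zero, cm_zero_right']
      | single_add m y g _ _ ihg =>
        rw [cm_add_right', U_add, U_add, ihg, cm_add_right', mul_single]
  · rw [U_single, hT0, map_one]
    simp
end
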